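/- arXiv:2405.19064 — 2 statements merged into one kernel-verified Lean document; each statement's English description precedes it below -/
import Mathlib

section
/- Let H : [τ, 0) → ℝ be a smooth positive function with H(t) → ∞ as t → 0⁻, satisfying (1/(2n)) H(t)³ ≤ H'(t) ≤ 2 H(t)³ for all t ∈ [τ, 0). Then for all t ∈ [τ, 0), sqrt(1/(-4t)) ≤ H(t) ≤ sqrt(n/(-t)). -/
open Set Filter Metric Topology

theorem stmt_5 (n : ℕ) (hn : 1 ≤ n) (τ : ℝ) (hτ : τ < 0) (H H' : ℝ → ℝ)
    (hpos : ∀ t ∈ Set.Ico τ 0, 0 < H t)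
    (hderiv : ∀ t ∈ Set.Ico τ 0, HasDerivAt H (H' t) t)
    (hlower : ∀ t ∈ Set.Ico τ 0, (1/(2*(n:ℝ))) * (H t)^3 ≤ H' t)
    (hupper : ∀ t ∈ Set.Ico τ 0, H' t ≤ 2 * (H t)^3)
    (hlim : Tendsto H (nhdsWithin 0 (Set.Iio 0)) atTop) :
    ∀ t ∈ Set.Ico τ 0,
      Real.sqrt (1/(-4*t)) ≤ H t ∧ H t ≤ Real.sqrt ((n:ℝ)/(-t)) := by
  have hn0 : (0:ℝ) < n := by exact_mod_cast Nat.lt_of_lt_of_le Nat.zero_lt_one hn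
  set G : ℝ → ℝ := fun t => (H t ^ 2)⁻¹ with hGdef
  have hG : ∀ t ∈ Set.Ico τ 0,
      HasDerivAt G (-(2 * H t * H' t) / (H t ^ 2) ^ 2) t := by
    intro t ht
    have hp := hpos t ht
    have h1 : HasDerivAt (fun t => H t ^ 2) (2 * H t ^ 1 * H' t) t := by
      have h := (hderiv t ht).pow 2
      simp at h
      rw [pow_one]
      exact h
    have h2 := h1.inv (ne_of_gt (pow_pos hp 2))
    rw [pow_one] at h2
    exact h2
  have hGlow : ∀ t ∈ Set.Ico τ 0, (-4 : ℝ) ≤ -(2 * H t * H' t) / (H t ^ 2) ^ 2 := by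
    intro t ht
    have hp := hpos t ht
    have hc : (0:ℝ) < (H t ^ 2) ^ 2 := by positivity
    rw [le_div_iff₀ hc]
    nlinarith [mul_le_mul_of_nonneg_left (hupper t ht)
      (le_of_lt (mul_pos two_pos hp)), pow_pos hp 4]
  have hGhigh : ∀ t ∈ Set.Ico τ 0, -(2 * H t * H' t) / (H t ^ 2) ^ 2 ≤ -(1 / n) := by
    intro t ht
    have hp := hpos t ht
    have hc : (0:ℝ) < (H t ^ 2) ^ 2 := by positivity
    rw [div_le_iff₀ hc]
    have hkey : 2 * H t * (1 / (2 * (n:ℝ)) * H t ^ 3) = 1 / n * (H t ^ 2) ^ 2 := by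
      field_simp
    nlinarith [mul_le_mul_of_nonneg_left (hlower t ht)
      (le_of_lt (mul_pos two_pos hp))]
  have hGlim : Tendsto G (nhdsWithin 0 (Set.Iio 0)) (nhds 0) := by
    have : Tendsto (fun t => H t ^ 2) (nhdsWithin 0 (Set.Iio 0)) atTop :=
      (tendsto_pow_atTop (two_ne_zero)).comp hlim
    exact this.inv_tendsto_atTop
  set F : ℝ → ℝ := fun t => G t + t / n with hFdef
  set K : ℝ → ℝ := fun t => G t + 4 * t with hKdef
  have hFd : ∀ t ∈ Set.Ico τ 0,
      HasDerivAt F (-(2 * H t * H' t) / (H t ^ 2) ^ 2 + 1 / n) t := by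
    intro t ht
    exact (hG t ht).add ((hasDerivAt_id t).div_const n)
  have hKd : ∀ t ∈ Set.Ico τ 0,
      HasDerivAt K (-(2 * H t * H' t) / (H t ^ 2) ^ 2 + 4) t := by
    intro t ht
    have h := (hG t ht).add ((hasDerivAt_id t).const_mul (4:ℝ))
    rw [mul_one] at h
    exact h
  have hIco : Convex ℝ (Set.Ico τ (0:ℝ)) := convex_Ico τ 0
  have hint : interior (Set.Ico τ (0:ℝ)) = Set.Ioo τ 0 := interior_Ico
  have hFanti : AntitoneOn F (Set.Ico τ 0) := by
    refine antitoneOn_of_deriv_nonpos hIco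
      (fun x hx => (hFd x hx).continuousAt.continuousWithinAt) ?_ ?_
    · intro x hx
      rw [hint] at hx
      exact ((hFd x (Set.Ioo_subset_Ico_self hx)).differentiableAt).differentiableWithinAt
    · intro x hx
      rw [hint] at hx
      have hx' : x ∈ Set.Ico τ 0 := Set.Ioo_subset_Ico_self hx
      rw [(hFd x hx').deriv]
      have := hGhigh x hx'
      have h1n : (0:ℝ) < 1 / n := by positivity
      linarith
  have hKmono : MonotoneOn K (Set.Ico τ 0) := by
    refine monotoneOn_of_deriv_nonneg hIco
      (fun x hx => (hKd x hx).continuousAt.continuousWithinAt) ?_ ?_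
    · intro x hx
      rw [hint] at hx
      exact ((hKd x (Set.Ioo_subset_Ico_self hx)).differentiableAt).differentiableWithinAt
    · intro x hx
      rw [hint] at hx
      have hx' : x ∈ Set.Ico τ 0 := Set.Ioo_subset_Ico_self hx
      rw [(hKd x hx').deriv]
      have := hGlow x hx'
      linarith
  intro t ht
  obtain ⟨htτ, ht0⟩ := ht
  have hp := hpos t ⟨htτ, ht0⟩
  have hFlim : Tendsto F (nhdsWithin 0 (Set.Iio 0)) (nhds 0) := by
    have h : Tendsto (fun s : ℝ => s / n) (nhdsWithin 0 (Set.Iio 0)) (nhds 0) := by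
      have := (continuous_id.div_const (n:ℝ)).tendsto (0:ℝ)
      simpa using this.mono_left nhdsWithin_le_nhds
    simpa using hGlim.add h
  have hKlim : Tendsto K (nhdsWithin 0 (Set.Iio 0)) (nhds 0) := by
    have h : Tendsto (fun s : ℝ => 4 * s) (nhdsWithin 0 (Set.Iio 0)) (nhds 0) := by
      have hc : Continuous fun s : ℝ => 4 * s := continuous_const.mul continuous_id
      have := hc.tendsto (0:ℝ)
      simpa using (this.mono_left nhdsWithin_le_nhds)
    simpa using hGlim.add h
  have hev : ∀ᶠ s in nhdsWithin 0 (Set.Iio 0), s ∈ Set.Ico τ 0 ∧ t ≤ s := by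
    have h1 : ∀ᶠ s in nhdsWithin 0 (Set.Iio 0), t < s := by
      apply eventually_nhdsWithin_of_eventually_nhds
      exact eventually_gt_nhds ht0
    filter_upwards [h1, self_mem_nhdsWithin] with s hs1 hs2
    exact ⟨⟨le_trans htτ hs1.le, hs2⟩, hs1.le⟩
  have hFt : 0 ≤ F t := by
    apply le_of_tendsto hFlim
    filter_upwards [hev] with s ⟨hs, hts⟩
    exact hFanti ⟨htτ, ht0⟩ hs hts
  have hKt : K t ≤ 0 := by
    apply ge_of_tendsto hKlim
    filter_upwards [hev] with s ⟨hs, hts⟩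
    exact hKmono ⟨htτ, ht0⟩ hs hts
  simp only [hFdef] at hFt
  simp only [hKdef] at hKt
  have hH2 : (0:ℝ) < H t ^ 2 := by positivity
  have hmt : (0:ℝ) < -t := by linarith
  have hG1 : -(t / n) ≤ G t := by linarith
  have hG2 : G t ≤ -(4 * t) := by linarith
  constructor
  · have h1 : 1 / (-4 * t) ≤ H t ^ 2 := by
      rw [div_le_iff₀ (by linarith)]
      have h := mul_le_mul_of_nonneg_left hG2 hH2.le
      rw [mul_inv_cancel₀ (ne_of_gt hH2)] at h
      nlinarith [h]
    calc Real.sqrt (1/(-4*t)) ≤ Real.sqrt (H t ^ 2) := Real.sqrt_le_sqrt h1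
      _ = H t := Real.sqrt_sq hp.le
  · rw [Real.le_sqrt hp.le, le_div_iff₀ hmt]
    have h := mul_le_mul_of_nonneg_left hG1 hH2.le
    rw [mul_inv_cancel₀ (ne_of_gt hH2)] at h
    have h2 : H t ^ 2 * (-t) * (1 / n) ≤ 1 := by
      calc H t ^ 2 * (-t) * (1 / n) = H t ^ 2 * -(t / n) := by ring
        _ ≤ 1 := h
    have h3 := mul_le_mul_of_nonneg_right h2 hn0.le
    rw [one_mul] at h3
    calc H t ^ 2 * (-t) = H t ^ 2 * (-t) * (1 / n) * n := by field_simp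
      _ ≤ (n:ℝ) := h3
    positivity
end

section
/- Let γ : [τ, 0) → ℝ^(n+1) be a C¹ curve with γ(t) → 0 as t → 0⁻ and |γ'(t)| ≤ sqrt(n/(-t)) for all t. Let Π_axis : ℝ^(n+1) → ℝ^(n+1) be an orthogonal projection. If |Π_axis(γ'(t))| / |γ'(t)| → 0 as t → 0⁻ (with γ'(t) ≠ 0), then |Π_axis(γ(t))| / sqrt(-t) → 0 as t → 0⁻. -/
open Set Filter Metric Topology

theorem stmt_7 (n : ℕ) (τ : ℝ) (hτ : τ < 0)
    (γ γ' : ℝ → EuclideanSpace ℝ (Fin (n+1)))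
    (P : EuclideanSpace ℝ (Fin (n+1)) →L[ℝ] EuclideanSpace ℝ (Fin (n+1)))
    (hidem : ∀ x, P (P x) = P x)
    (hselfadj : ∀ x y, (inner ℝ (P x) y : ℝ) = (inner ℝ x (P y) : ℝ))
    (hderiv : ∀ t ∈ Set.Ico τ 0, HasDerivAt γ (γ' t) t)
    (hcont : ContinuousOn γ' (Set.Ico τ 0))
    (hne : ∀ t ∈ Set.Ico τ 0, γ' t ≠ 0)
    (hlim : Tendsto γ (nhdsWithin 0 (Set.Iio 0)) (nhds 0))
    (hspeed : ∀ t ∈ Set.Ico τ 0, ‖γ' t‖ ≤ Real.sqrt ((n:ℝ)/(-t)))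
    (hax : Tendsto (fun t => ‖P (γ' t)‖ / ‖γ' t‖) (nhdsWithin 0 (Set.Iio 0))
      (nhds 0)) :
    Tendsto (fun t => ‖P (γ t)‖ / Real.sqrt (-t)) (nhdsWithin 0 (Set.Iio 0))
      (nhds 0) := by
  rw [NormedAddCommGroup.tendsto_nhds_zero] at hax ⊢
  intro ε hε
  set c : ℝ := 2 * Real.sqrt n + 1 with hc
  have hc0 : (0:ℝ) < c := by positivity
  have hε₁ : 0 < ε / c := by positivity
  obtain ⟨l, hl, hsub⟩ := mem_nhdsLT_iff_exists_Ioo_subset.mp (hax (ε / c) hε₁)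
  set a : ℝ := max τ l with ha
  have ha0 : a < 0 := max_lt hτ hl
  -- derivative bound on (a, 0)
  have hPd : ∀ s ∈ Ioo a 0, ‖P (γ' s)‖ ≤ (ε / c) * (Real.sqrt n / Real.sqrt (-s)) := by
    intro s hs
    have hsmem : s ∈ Set.Ico τ 0 := ⟨(le_max_left τ l).trans hs.1.le, hs.2⟩
    have hb : ‖‖P (γ' s)‖ / ‖γ' s‖‖ < ε / c := hsub ⟨(le_max_right τ l).trans_lt hs.1, hs.2⟩
    have hγ'pos : 0 < ‖γ' s‖ := norm_pos_iff.mpr (hne s hsmem)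
    rw [Real.norm_eq_abs, abs_of_nonneg (by positivity)] at hb
    have h1 : ‖P (γ' s)‖ ≤ (ε / c) * ‖γ' s‖ := by
      rw [div_lt_iff₀ hγ'pos] at hb; linarith
    have h2 : ‖γ' s‖ ≤ Real.sqrt n / Real.sqrt (-s) := by
      have := hspeed s hsmem
      rwa [Real.sqrt_div (by positivity)] at this
    calc ‖P (γ' s)‖ ≤ (ε / c) * ‖γ' s‖ := h1
      _ ≤ (ε / c) * (Real.sqrt n / Real.sqrt (-s)) :=
        mul_le_mul_of_nonneg_left h2 hε₁.le
  -- key estimate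
  have key : ∀ t ∈ Ioo a 0, ‖P (γ t)‖ ≤ 2 * (ε / c) * Real.sqrt n * Real.sqrt (-t) := by
    intro t ht
    have htτ : t ∈ Set.Ico τ 0 := ⟨(le_max_left τ l).trans ht.1.le, ht.2⟩
    have step : ∀ t' ∈ Ico t 0,
        ‖P (γ t') - P (γ t)‖ ≤ 2 * (ε / c) * Real.sqrt n * (Real.sqrt (-t) - Real.sqrt (-t')) := by
      intro t' ht'
      have ht'0 : t' < 0 := ht'.2
      have hsubI : Icc t t' ⊆ Set.Ico τ 0 := fun s hs =>
        ⟨htτ.1.trans hs.1, hs.2.trans_lt ht'0⟩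
      have hsubI2 : Ico t t' ⊆ Ioo a 0 := fun s hs =>
        ⟨ht.1.trans_le hs.1, hs.2.trans ht'0⟩
      have hγcont : ContinuousOn (fun s => P (γ s) - P (γ t)) (Icc t t') := by
        intro s hs
        exact ((P.continuous.continuousAt.comp
          (hderiv s (hsubI hs)).continuousAt).continuousWithinAt).sub continuousWithinAt_const
      have hf' : ∀ s ∈ Ico t t',
          HasDerivWithinAt (fun s => P (γ s) - P (γ t)) (P (γ' s)) (Ici s) s := by
        intro s hs
        exact (((P.hasFDerivAt).comp_hasDerivAt s (hderiv s (hsubI ⟨hs.1, hs.2.le⟩))).sub_const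
          _).hasDerivWithinAt
      have hB' : ∀ s ∈ Ico t t',
          HasDerivWithinAt (fun s => 2 * (ε / c) * Real.sqrt n * (Real.sqrt (-t) - Real.sqrt (-s)))
            ((ε / c) * (Real.sqrt n / Real.sqrt (-s))) (Ici s) s := by
        intro s hs
        have hs0 : s < 0 := hs.2.trans ht'0
        have h1 : HasDerivAt (fun s : ℝ => Real.sqrt (-s)) (-(1 / (2 * Real.sqrt (-s)))) s := by
          have := (Real.hasDerivAt_sqrt (x := -s) (by linarith)).comp s (hasDerivAt_neg s)
          simpa [Function.comp_def] using this
        have h2 : HasDerivAt (fun s : ℝ => 2 * (ε / c) * Real.sqrt n *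
            (Real.sqrt (-t) - Real.sqrt (-s)))
            (2 * (ε / c) * Real.sqrt n * (0 - -(1 / (2 * Real.sqrt (-s))))) s :=
          ((hasDerivAt_const s _).sub h1).const_mul _
        have heq : 2 * (ε / c) * Real.sqrt n * (0 - -(1 / (2 * Real.sqrt (-s))))
            = (ε / c) * (Real.sqrt n / Real.sqrt (-s)) := by
          have hsp : (0:ℝ) < Real.sqrt (-s) := Real.sqrt_pos.mpr (by linarith)
          field_simp
          ring
        rw [heq] at h2
        exact h2.hasDerivWithinAt
      have hBcont : ContinuousOn
          (fun s => 2 * (ε / c) * Real.sqrt n * (Real.sqrt (-t) - Real.sqrt (-s))) (Icc t t') :=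
        (continuous_const.mul (continuous_const.sub
          (Real.continuous_sqrt.comp continuous_neg))).continuousOn
      have := image_norm_le_of_norm_deriv_right_le_deriv_boundary' hγcont hf'
        (B := fun s => 2 * (ε / c) * Real.sqrt n * (Real.sqrt (-t) - Real.sqrt (-s)))
        (B' := fun s => (ε / c) * (Real.sqrt n / Real.sqrt (-s)))
        (by simp) hBcont hB' (fun s hs => hPd s (hsubI2 hs))
      exact this (right_mem_Icc.mpr ht'.1)
    -- pass to the limit t' → 0⁻
    have hmem : Ioo t 0 ∈ 𝓝[<] (0:ℝ) := Ioo_mem_nhdsLT_of_mem ⟨ht.2, le_refl 0⟩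
    have hlim2 : Tendsto (fun t' => ‖P (γ t')‖
        + 2 * (ε / c) * Real.sqrt n * (Real.sqrt (-t) - Real.sqrt (-t'))) (𝓝[<] (0:ℝ))
        (𝓝 (2 * (ε / c) * Real.sqrt n * Real.sqrt (-t))) := by
      have h1 : Tendsto (fun t' => ‖P (γ t')‖) (𝓝[<] (0:ℝ)) (𝓝 0) := by
        have := ((P.continuous.tendsto 0).comp hlim)
        rw [map_zero] at this
        simpa [Function.comp_def] using (continuous_norm.tendsto (0 : EuclideanSpace ℝ (Fin (n+1)))).comp this
      have h2 : Tendsto (fun t' : ℝ => Real.sqrt (-t')) (𝓝[<] (0:ℝ)) (𝓝 0) := by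
        have : Tendsto (fun t' : ℝ => Real.sqrt (-t')) (𝓝 (0:ℝ)) (𝓝 (Real.sqrt (-0))) :=
          (Real.continuous_sqrt.comp continuous_neg).tendsto 0
        simpa using this.mono_left nhdsWithin_le_nhds
      have h3 : Tendsto (fun t' : ℝ => Real.sqrt (-t) - Real.sqrt (-t')) (𝓝[<] (0:ℝ))
          (𝓝 (Real.sqrt (-t) - 0)) :=
        (tendsto_const_nhds (x := Real.sqrt (-t))).sub h2
      have h4 := h1.add (h3.const_mul (2 * (ε / c) * Real.sqrt n))
      simpa using h4
    refine ge_of_tendsto hlim2 ?_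
    filter_upwards [hmem] with t' ht'
    have := step t' ⟨ht'.1.le, ht'.2⟩
    have h3 : ‖P (γ t)‖ ≤ ‖P (γ t')‖ + ‖P (γ t') - P (γ t)‖ := by
      have h4 := norm_le_insert' (P (γ t)) (P (γ t'))
      rwa [norm_sub_rev] at h4
    linarith
  -- conclude
  filter_upwards [Ioo_mem_nhdsLT_of_mem (a := a) (c := (0:ℝ)) ⟨ha0, le_refl 0⟩] with t ht
  have h0t : 0 < Real.sqrt (-t) := Real.sqrt_pos.mpr (by linarith [ht.2])
  have hk := key t ht
  have hratio : ‖P (γ t)‖ / Real.sqrt (-t) ≤ 2 * (ε / c) * Real.sqrt n := by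
    rw [div_le_iff₀ h0t]; exact hk
  have hnn : 0 ≤ ‖P (γ t)‖ / Real.sqrt (-t) := by positivity
  rw [Real.norm_eq_abs, abs_of_nonneg hnn]
  calc ‖P (γ t)‖ / Real.sqrt (-t) ≤ 2 * (ε / c) * Real.sqrt n := hratio
    _ < ε := by
      rw [show 2 * (ε / c) * Real.sqrt n = ε * (2 * Real.sqrt n) / c by ring,
        div_lt_iff₀ hc0, hc]
      nlinarith [Real.sqrt_nonneg (n:ℝ)]
end
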